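/- arXiv:0810.0575 — 3 statements merged into one kernel-verified Lean document; each statement's English description precedes it below -/
import Mathlib

section
/- Let V be an n-dimensional complex vector space with a Hermitian inner product, and suppose φ ∈ ⋀^{r+1} V* is a complex r-fold vector cross product, i.e. ‖ι_{e₁∧⋯∧e_r} φ‖ = 1 for all orthonormal r-tuples (e₁,…,e_r) in V. Then either r = 1 and n is even, or r = n-1. -/
open Module

/-- Interior contraction of an alternating `(r+1)`-form `φ` by the `r`-vector
`e₁ ∧ ⋯ ∧ e_r`, as a continuous linear functional `v ↦ φ (e₁, …, e_r, v)` on `V`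
(whose norm is the dual norm induced by the Hermitian metric). -/
noncomputable def contraction {V : Type*} [NormedAddCommGroup V] [InnerProductSpace ℂ V]
    [FiniteDimensional ℂ V] {r : ℕ} (φ : V [⋀^Fin (r + 1)]→ₗ[ℂ] ℂ) (e : Fin r → V) :
    V →L[ℂ] ℂ :=
  LinearMap.toContinuousLinearMap (φ.toMultilinearMap.toLinearMap (Fin.snoc e 0) (Fin.last r))

/-- `φ ∈ ⋀^{r+1} V*` is a complex `r`-fold vector cross product if
`‖ι_{e₁ ∧ ⋯ ∧ e_r} φ‖ = 1` for every orthonormal family `e₁, …, e_r`. -/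
def IsCrossProduct {V : Type*} [NormedAddCommGroup V] [InnerProductSpace ℂ V]
    [FiniteDimensional ℂ V] {r : ℕ} (φ : V [⋀^Fin (r + 1)]→ₗ[ℂ] ℂ) : Prop :=
  ∀ e : Fin r → V, Orthonormal ℂ e → ‖contraction φ e‖ = 1


open Fin Function
open scoped InnerProductSpace ComplexConjugate
set_option linter.unusedSectionVars false
set_option maxHeartbeats 1000000

lemma contraction_apply {V : Type*} [NormedAddCommGroup V] [InnerProductSpace ℂ V]
    [FiniteDimensional ℂ V] {r : ℕ} (φ : V [⋀^Fin (r + 1)]→ₗ[ℂ] ℂ) (E : Fin r → V) (w : V) :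
    contraction φ E w = φ (Fin.snoc E w) := by
  simp [contraction, MultilinearMap.toLinearMap, Fin.update_snoc_last]

section Gen
variable {V : Type*} [NormedAddCommGroup V] [InnerProductSpace ℂ V] [FiniteDimensional ℂ V]

/-- append a vector to an orthonormal family stays orthonormal -/
lemma Orthonormal.snocc {m : ℕ} {g : Fin m → V} (hg : Orthonormal ℂ g) {x : V}
    (hx : ‖x‖ = 1) (hxg : ∀ i, ⟪g i, x⟫_ℂ = 0) : Orthonormal ℂ (Fin.snoc g x) := by
  rw [orthonormal_iff_ite] at hg ⊢
  intro i j
  induction i using Fin.lastCases with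
  | last =>
    induction j using Fin.lastCases with
    | last => simp [Fin.snoc_last, inner_self_eq_norm_sq_to_K, hx]
    | cast j =>
      have : Fin.last m ≠ Fin.castSucc j := (Fin.castSucc_lt_last j).ne'
      simp [Fin.snoc_last, Fin.snoc_castSucc, this, inner_eq_zero_symm.2 (hxg j)]
  | cast i =>
    induction j using Fin.lastCases with
    | last =>
      have : Fin.castSucc i ≠ Fin.last m := (Fin.castSucc_lt_last i).ne
      simp [Fin.snoc_last, Fin.snoc_castSucc, this, hxg i]
    | cast j => simpa [Fin.snoc_castSucc, Fin.castSucc_inj] using hg i j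

lemma norm_one_of_inner_self_one {x : V} (h : ⟪x, x⟫_ℂ = 1) : ‖x‖ = 1 := by
  have h2 := inner_self_eq_norm_sq_to_K (𝕜 := ℂ) x
  rw [h, ← RCLike.ofReal_pow] at h2
  have h3 : ‖x‖ ^ 2 = 1 := RCLike.ofReal_inj (K := ℂ).mp (by rw [RCLike.ofReal_one]; exact h2.symm)
  nlinarith [norm_nonneg x]

end Gen

section Core
variable {V : Type*} [NormedAddCommGroup V] [InnerProductSpace ℂ V] [FiniteDimensional ℂ V]
  {k : ℕ} {φ : V [⋀^Fin (k + 3)]→ₗ[ℂ] ℂ} {e : Fin k → V}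

/-- the tuple (e₁,…,e_k,u,v,w) -/
def T (e : Fin k → V) (u v w : V) : Fin (k + 3) → V :=
  Fin.snoc (Fin.snoc (Fin.snoc e u) v) w

noncomputable def Pv (φ : V [⋀^Fin (k + 3)]→ₗ[ℂ] ℂ) (e : Fin k → V) (u v : V) : V :=
  (InnerProductSpace.toDual ℂ V).symm (contraction φ (Fin.snoc (Fin.snoc e u) v))

lemma inner_Pv (u v w : V) : ⟪Pv φ e u v, w⟫_ℂ = φ (T e u v w) := by
  rw [Pv, InnerProductSpace.toDual_symm_apply, contraction_apply]; rfl

lemma norm_Pv {u v : V} (hφ : IsCrossProduct φ)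
    (h : Orthonormal ℂ (Fin.snoc (Fin.snoc e u) v)) : ‖Pv φ e u v‖ = 1 := by
  rw [Pv, LinearIsometryEquiv.norm_map]; exact hφ _ h

def i1 : Fin (k + 3) := castSucc (castSucc (last k))
def i2 : Fin (k + 3) := castSucc (last (k + 1))
def i3 : Fin (k + 3) := last (k + 2)

lemma T_apply1 (u v w : V) : T e u v w (i1 (k := k)) = u := by
  simp [T, i1, Fin.snoc_castSucc, Fin.snoc_last]
lemma T_apply2 (u v w : V) : T e u v w (i2 (k := k)) = v := by
  simp [T, i2, Fin.snoc_castSucc, Fin.snoc_last]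
lemma T_apply3 (u v w : V) : T e u v w (i3 (k := k)) = w := by
  simp [T, i3, Fin.snoc_last]
lemma T_apply0 (u v w : V) (i : Fin k) :
    T e u v w (castSucc (castSucc (castSucc i))) = e i := by
  simp [T, Fin.snoc_castSucc]

lemma i1_ne_i2 : (i1 : Fin (k+3)) ≠ i2 := by
  simp only [i1, i2, Fin.ne_iff_vne, Fin.coe_castSucc, Fin.val_last]; omega
lemma i1_ne_i3 : (i1 : Fin (k+3)) ≠ i3 := by
  simp only [i1, i3, Fin.ne_iff_vne, Fin.coe_castSucc, Fin.val_last]; omega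
lemma i2_ne_i3 : (i2 : Fin (k+3)) ≠ i3 := by
  simp only [i2, i3, Fin.ne_iff_vne, Fin.coe_castSucc, Fin.val_last]; omega
lemma i0_ne_i2 (i : Fin k) : castSucc (castSucc (castSucc i)) ≠ (i2 : Fin (k+3)) := by
  simp only [i2, Fin.ne_iff_vne, Fin.coe_castSucc, Fin.val_last]; omega
lemma i0_ne_i3 (i : Fin k) : castSucc (castSucc (castSucc i)) ≠ (i3 : Fin (k+3)) := by
  simp only [i3, Fin.ne_iff_vne, Fin.coe_castSucc, Fin.val_last]; omega

lemma phi_eq12 (u w : V) : φ (T e u u w) = 0 :=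
  φ.map_eq_zero_of_eq _ (by rw [T_apply1, T_apply2]) i1_ne_i2
lemma phi_eq13 (u v : V) : φ (T e u v u) = 0 :=
  φ.map_eq_zero_of_eq _ (by rw [T_apply1, T_apply3]) i1_ne_i3
lemma phi_eq23 (u v : V) : φ (T e u v v) = 0 :=
  φ.map_eq_zero_of_eq _ (by rw [T_apply2, T_apply3]) i2_ne_i3
lemma phi_eq02 (u w : V) (i : Fin k) : φ (T e u (e i) w) = 0 :=
  φ.map_eq_zero_of_eq _ (by rw [T_apply0, T_apply2]) (i0_ne_i2 i)
lemma phi_eq03 (u v : V) (i : Fin k) : φ (T e u v (e i)) = 0 :=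
  φ.map_eq_zero_of_eq _ (by rw [T_apply0, T_apply3]) (i0_ne_i3 i)

lemma T_update1 (u u' v w : V) : update (T e u v w) i1 u' = T e u' v w := by
  simp only [T, i1, ← Fin.snoc_update, Fin.update_snoc_last]
lemma T_update2 (u v v' w : V) : update (T e u v w) i2 v' = T e u v' w := by
  simp only [T, i2, ← Fin.snoc_update, Fin.update_snoc_last]
lemma T_update3 (u v w w' : V) : update (T e u v w) i3 w' = T e u v w' := by
  simp only [T, i3, Fin.update_snoc_last]

lemma phi_add1 (u u' v w : V) : φ (T e (u + u') v w) = φ (T e u v w) + φ (T e u' v w) := by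
  simpa only [T_update1] using φ.map_update_add (T e u v w) i1 u u'
lemma phi_add2 (u x y w : V) : φ (T e u (x + y) w) = φ (T e u x w) + φ (T e u y w) := by
  simpa only [T_update2] using φ.map_update_add (T e u x w) i2 x y
lemma phi_add3 (u v x y : V) : φ (T e u v (x + y)) = φ (T e u v x) + φ (T e u v y) := by
  simpa only [T_update3] using φ.map_update_add (T e u v x) i3 x y
lemma phi_smul1 (c : ℂ) (u v w : V) : φ (T e (c • u) v w) = c * φ (T e u v w) := by
  simpa only [T_update1, smul_eq_mul] using φ.map_update_smul (T e u v w) i1 c u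
lemma phi_smul2 (c : ℂ) (u v w : V) : φ (T e u (c • v) w) = c * φ (T e u v w) := by
  simpa only [T_update2, smul_eq_mul] using φ.map_update_smul (T e u v w) i2 c v
lemma phi_smul3 (c : ℂ) (u v w : V) : φ (T e u v (c • w)) = c * φ (T e u v w) := by
  simpa only [T_update3, smul_eq_mul] using φ.map_update_smul (T e u v w) i3 c w

lemma phi_swap12 (u v w : V) : φ (T e v u w) = - φ (T e u v w) := by
  have h0 := phi_eq12 (φ := φ) (e := e) (u + v) w
  rw [phi_add1, phi_add2, phi_add2, phi_eq12, phi_eq12] at h0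
  linear_combination h0
lemma phi_swap23 (u v w : V) : φ (T e u w v) = - φ (T e u v w) := by
  have h0 := phi_eq23 (φ := φ) (e := e) u (v + w)
  rw [phi_add2, phi_add3, phi_add3, phi_eq23, phi_eq23] at h0
  linear_combination h0

lemma Pv_add2 (u x y : V) : Pv φ e u (x + y) = Pv φ e u x + Pv φ e u y :=
  ext_inner_right ℂ fun w => by
    rw [inner_Pv, phi_add2, inner_add_left, inner_Pv, inner_Pv]
lemma Pv_smul2 (c : ℂ) (u x : V) : Pv φ e u (c • x) = conj c • Pv φ e u x :=
  ext_inner_right ℂ fun w => by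
    rw [inner_Pv, phi_smul2, inner_smul_left, inner_Pv, Complex.conj_conj]
lemma Pv_add1 (x y v : V) : Pv φ e (x + y) v = Pv φ e x v + Pv φ e y v :=
  ext_inner_right ℂ fun w => by
    rw [inner_Pv, phi_add1, inner_add_left, inner_Pv, inner_Pv]
lemma Pv_smul1 (c : ℂ) (x v : V) : Pv φ e (c • x) v = conj c • Pv φ e x v :=
  ext_inner_right ℂ fun w => by
    rw [inner_Pv, phi_smul1, inner_smul_left, inner_Pv, Complex.conj_conj]
lemma Pv_neg12 (u v : V) : Pv φ e u v = - Pv φ e v u :=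
  ext_inner_right ℂ fun w => by
    rw [inner_Pv, inner_neg_left, inner_Pv, phi_swap12]
lemma Pv_diag (u : V) : Pv φ e u u = 0 :=
  ext_inner_right ℂ fun w => by rw [inner_Pv, phi_eq12, inner_zero_left]
lemma Pv_e (u : V) (i : Fin k) : Pv φ e u (e i) = 0 :=
  ext_inner_right ℂ fun w => by rw [inner_Pv, phi_eq02, inner_zero_left]
lemma Pv_sub2 (u x y : V) : Pv φ e u (x - y) = Pv φ e u x - Pv φ e u y := by
  have h := Pv_add2 (φ := φ) (e := e) u (x - y) y
  rw [sub_add_cancel] at h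
  rw [h]; abel

/-- Claim A: for unit `u ⟂ e` and `x, y ⟂ e, u`,
`v ↦ Pv u v` is "anti-unitary" on the orthocomplement. -/
lemma keyA (hφ : IsCrossProduct φ) (he : Orthonormal ℂ e) {u : V} (hu : ‖u‖ = 1)
    (hue : ∀ i, ⟪e i, u⟫_ℂ = 0) {x y : V}
    (hxe : ∀ i, ⟪e i, x⟫_ℂ = 0) (hxu : ⟪u, x⟫_ℂ = 0)
    (hye : ∀ i, ⟪e i, y⟫_ℂ = 0) (hyu : ⟪u, y⟫_ℂ = 0) :
    ⟪Pv φ e u x, Pv φ e u y⟫_ℂ = ⟪y, x⟫_ℂ := by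
  -- diagonal, unit vectors
  have unit : ∀ z : V, (∀ i, ⟪e i, z⟫_ℂ = 0) → ⟪u, z⟫_ℂ = 0 → ‖z‖ = 1 →
      ‖Pv φ e u z‖ = 1 := by
    intro z hze hzu hz1
    refine norm_Pv hφ (((he.snocc hu hue).snocc hz1) ?_)
    intro i
    induction i using Fin.lastCases with
    | last => simpa [Fin.snoc_last] using hzu
    | cast i => simpa [Fin.snoc_castSucc] using hze i
  -- diagonal, general vectors
  have diag : ∀ z : V, (∀ i, ⟪e i, z⟫_ℂ = 0) → ⟪u, z⟫_ℂ = 0 →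
      ⟪Pv φ e u z, Pv φ e u z⟫_ℂ = ⟪z, z⟫_ℂ := by
    intro z hze hzu
    by_cases h0 : z = 0
    · subst h0
      have : Pv φ e u (0 : V) = 0 := by
        have := Pv_smul2 (φ := φ) (e := e) (0 : ℂ) u 0
        simpa using this
      simp [this]
    · set c : ℝ := ‖z‖ with hc
      have hcne : (c : ℂ) ≠ 0 := by
        simp only [ne_eq, Complex.ofReal_eq_zero, hc, norm_eq_zero]; exact h0
      set z0 : V := ((c : ℂ))⁻¹ • z with hz0
      have hne : ‖z‖ ≠ 0 := norm_ne_zero_iff.mpr h0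
      have hz0n : ‖z0‖ = 1 := by
        rw [hz0, norm_smul]
        simp only [norm_inv, Complex.norm_real, Real.norm_eq_abs,
          abs_of_nonneg (norm_nonneg z)]
        rw [hc, abs_of_nonneg (norm_nonneg z)]
        exact inv_mul_cancel₀ hne
      have hzz : z = (c : ℂ) • z0 := by
        rw [hz0, smul_smul, mul_inv_cancel₀ hcne, one_smul]
      have h1 := unit z0 (fun i => by rw [hz0, inner_smul_right, hze, mul_zero])
        (by rw [hz0, inner_smul_right, hzu, mul_zero]) hz0n
      have h2 : ⟪Pv φ e u z0, Pv φ e u z0⟫_ℂ = 1 := by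
        simp [inner_self_eq_norm_sq_to_K, h1]
      have h3 : ⟪z0, z0⟫_ℂ = 1 := by
        simp [inner_self_eq_norm_sq_to_K, hz0n]
      rw [hzz, Pv_smul2, inner_smul_left, inner_smul_right, inner_smul_left,
        inner_smul_right, h2, h3, Complex.conj_conj, Complex.conj_ofReal]
  -- polarization
  have hx'e : ∀ i, ⟪e i, x + y⟫_ℂ = 0 := fun i => by
    rw [inner_add_right, hxe, hye, add_zero]
  have hx'u : ⟪u, x + y⟫_ℂ = 0 := by rw [inner_add_right, hxu, hyu, add_zero]
  have hi'e : ∀ i, ⟪e i, x + Complex.I • y⟫_ℂ = 0 := fun i => by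
    rw [inner_add_right, inner_smul_right, hxe, hye, mul_zero, add_zero]
  have hi'u : ⟪u, x + Complex.I • y⟫_ℂ = 0 := by
    rw [inner_add_right, inner_smul_right, hxu, hyu, mul_zero, add_zero]
  have E1 := diag (x + y) hx'e hx'u
  have E2 := diag (x + Complex.I • y) hi'e hi'u
  have dx := diag x hxe hxu
  have dy := diag y hye hyu
  rw [Pv_add2, inner_add_left, inner_add_right, inner_add_right, inner_add_left,
    inner_add_right, inner_add_right, dx, dy] at E1
  rw [Pv_add2, Pv_smul2, inner_add_left, inner_add_right, inner_add_right,
    inner_add_left, inner_add_right, inner_add_right, inner_smul_left,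
    inner_smul_right, inner_smul_left, inner_smul_right, inner_smul_left,
    inner_smul_right, inner_smul_left, inner_smul_right, dx, dy,
    Complex.conj_conj] at E2
  have hI2 : Complex.I ^ 2 = -1 := Complex.I_sq
  have hIc : conj Complex.I = -Complex.I := Complex.conj_I
  rw [hIc] at E2
  have e1 : ⟪Pv φ e u x, Pv φ e u y⟫_ℂ + ⟪Pv φ e u y, Pv φ e u x⟫_ℂ
      = ⟪x, y⟫_ℂ + ⟪y, x⟫_ℂ := by linear_combination E1
  have e2 : -Complex.I * ⟪Pv φ e u x, Pv φ e u y⟫_ℂ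
      + Complex.I * ⟪Pv φ e u y, Pv φ e u x⟫_ℂ
      = Complex.I * ⟪x, y⟫_ℂ - Complex.I * ⟪y, x⟫_ℂ := by linear_combination E2
  have e3 : ⟪Pv φ e u x, Pv φ e u y⟫_ℂ - ⟪Pv φ e u y, Pv φ e u x⟫_ℂ
      = -⟪x, y⟫_ℂ + ⟪y, x⟫_ℂ := by
    linear_combination Complex.I * e2 + (⟪Pv φ e u x, Pv φ e u y⟫_ℂ
      - ⟪Pv φ e u y, Pv φ e u x⟫_ℂ + ⟪x, y⟫_ℂ - ⟪y, x⟫_ℂ) * hI2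
  linear_combination (e1 + e3) / 2

end Core
section Core2
variable {V : Type*} [NormedAddCommGroup V] [InnerProductSpace ℂ V] [FiniteDimensional ℂ V]
  {k : ℕ} {φ : V [⋀^Fin (k + 3)]→ₗ[ℂ] ℂ} {e : Fin k → V}

lemma caseI (hφ : IsCrossProduct φ) (he : Orthonormal ℂ e)
    {u u' y w : V} (hu : ‖u‖ = 1) (hu' : ‖u'‖ = 1)
    (hue : ∀ i, ⟪e i, u⟫_ℂ = 0) (hu'e : ∀ i, ⟪e i, u'⟫_ℂ = 0)
    (hye : ∀ i, ⟪e i, y⟫_ℂ = 0) (hwe : ∀ i, ⟪e i, w⟫_ℂ = 0)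
    (huu' : ⟪u, u'⟫_ℂ = 0) (huw : ⟪u, w⟫_ℂ = 0) (hu'w : ⟪u', w⟫_ℂ = 0)
    (huy : ⟪u, y⟫_ℂ = 0) (hu'y : ⟪u', y⟫_ℂ = 0) (hyw : ⟪y, w⟫_ℂ = 0) :
    ⟪Pv φ e u w, Pv φ e u' y⟫_ℂ = 0 := by
  have huu : ⟪u, u⟫_ℂ = 1 := by
    simp [inner_self_eq_norm_sq_to_K, hu]
  have hu'u'2 : ⟪u', u'⟫_ℂ = 1 := by
    simp [inner_self_eq_norm_sq_to_K, hu']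
  have hu'u : ⟪u', u⟫_ℂ = 0 := inner_eq_zero_symm.mp huu'
  set c : ℝ := (Real.sqrt 2)⁻¹ with hc_def
  have hc2 : (c : ℂ) * (c : ℂ) = 1 / 2 := by
    have h2 : Real.sqrt 2 * Real.sqrt 2 = 2 :=
      Real.mul_self_sqrt (by norm_num)
    rw [hc_def]
    push_cast
    rw [← mul_inv]
    rw [show ((Real.sqrt 2 : ℝ) : ℂ) * ((Real.sqrt 2 : ℝ) : ℂ)
        = ((Real.sqrt 2 * Real.sqrt 2 : ℝ) : ℂ) by push_cast; ring, h2]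
    norm_num
  have hI2 : Complex.I ^ 2 = -1 := Complex.I_sq
  -- the two auxiliary unit vectors
  have ha1 : ‖((c : ℂ) • u + (c : ℂ) • u' : V)‖ = 1 := by
    apply norm_one_of_inner_self_one
    simp only [inner_add_left, inner_add_right, inner_smul_left, inner_smul_right,
      Complex.conj_ofReal, huu, hu'u'2, huu', hu'u]
    linear_combination 2 * hc2
  have ha2 : ‖((c : ℂ) • u + ((c : ℂ) * Complex.I) • u' : V)‖ = 1 := by
    apply norm_one_of_inner_self_one
    simp only [inner_add_left, inner_add_right, inner_smul_left, inner_smul_right,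
      Complex.conj_ofReal, map_mul, Complex.conj_I, huu, hu'u'2, huu', hu'u]
    linear_combination 2 * hc2 - (c : ℂ) * (c : ℂ) * hI2
  -- diagonal identities
  have K1 : ⟪Pv φ e u w, Pv φ e u y⟫_ℂ = 0 := by
    rw [keyA hφ he hu hue hwe huw hye huy, hyw]
  have K2 : ⟪Pv φ e u' w, Pv φ e u' y⟫_ℂ = 0 := by
    rw [keyA hφ he hu' hu'e hwe hu'w hye hu'y, hyw]
  have A1 : ⟪Pv φ e ((c : ℂ) • u + (c : ℂ) • u') w,
      Pv φ e ((c : ℂ) • u + (c : ℂ) • u') y⟫_ℂ = 0 := by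
    rw [keyA hφ he ha1
      (fun i => by rw [inner_add_right, inner_smul_right, inner_smul_right,
        hue i, hu'e i]; ring)
      hwe
      (by rw [inner_add_left, inner_smul_left, inner_smul_left, huw, hu'w]; ring)
      hye
      (by rw [inner_add_left, inner_smul_left, inner_smul_left, huy, hu'y]; ring), hyw]
  have A2 : ⟪Pv φ e ((c : ℂ) • u + ((c : ℂ) * Complex.I) • u') w,
      Pv φ e ((c : ℂ) • u + ((c : ℂ) * Complex.I) • u') y⟫_ℂ = 0 := by
    rw [keyA hφ he ha2
      (fun i => by rw [inner_add_right, inner_smul_right, inner_smul_right,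
        hue i, hu'e i]; ring)
      hwe
      (by rw [inner_add_left, inner_smul_left, inner_smul_left, huw, hu'w]; ring)
      hye
      (by rw [inner_add_left, inner_smul_left, inner_smul_left, huy, hu'y]; ring), hyw]
  simp only [Pv_add1, Pv_smul1, inner_add_left, inner_add_right, inner_smul_left,
    inner_smul_right, Complex.conj_ofReal, map_mul, map_neg, Complex.conj_conj, Complex.conj_I, K1, K2] at A1 A2
  have h1 : (c : ℂ) * (c : ℂ) * (⟪Pv φ e u w, Pv φ e u' y⟫_ℂ
      + ⟪Pv φ e u' w, Pv φ e u y⟫_ℂ) = 0 := by linear_combination A1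
  have h2 : (c : ℂ) * (c : ℂ) * Complex.I * (⟪Pv φ e u' w, Pv φ e u y⟫_ℂ
      - ⟪Pv φ e u w, Pv φ e u' y⟫_ℂ) = 0 := by linear_combination A2
  have h3 : (c : ℂ) * (c : ℂ) * (⟪Pv φ e u' w, Pv φ e u y⟫_ℂ
      - ⟪Pv φ e u w, Pv φ e u' y⟫_ℂ) = 0 := by
    linear_combination -Complex.I * h2
      + ((c : ℂ) * (c : ℂ) * (⟪Pv φ e u' w, Pv φ e u y⟫_ℂ
        - ⟪Pv φ e u w, Pv φ e u' y⟫_ℂ)) * hI2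
  have e1 : ⟪Pv φ e u w, Pv φ e u' y⟫_ℂ + ⟪Pv φ e u' w, Pv φ e u y⟫_ℂ = 0 := by
    linear_combination 2 * h1 - 2 * (⟪Pv φ e u w, Pv φ e u' y⟫_ℂ
      + ⟪Pv φ e u' w, Pv φ e u y⟫_ℂ) * hc2
  have e2 : ⟪Pv φ e u' w, Pv φ e u y⟫_ℂ - ⟪Pv φ e u w, Pv φ e u' y⟫_ℂ = 0 := by
    linear_combination 2 * h3 - 2 * (⟪Pv φ e u' w, Pv φ e u y⟫_ℂ
      - ⟪Pv φ e u w, Pv φ e u' y⟫_ℂ) * hc2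
  linear_combination (e1 - e2) / 2

end Core2
section NoCross
variable {V : Type*} [NormedAddCommGroup V] [InnerProductSpace ℂ V] [FiniteDimensional ℂ V]

lemma no_cross {k n : ℕ} (hn : finrank ℂ V = n) (hkn : k + 4 ≤ n)
    (φ : V [⋀^Fin (k + 3)]→ₗ[ℂ] ℂ) (hφ : IsCrossProduct φ) : False := by
  have b : OrthonormalBasis (Fin n) ℂ V :=
    (stdOrthonormalBasis ℂ V).reindex (finCongr hn)
  have hb : ∀ i j : Fin n, ⟪b i, b j⟫_ℂ = if i = j then 1 else 0 :=
    orthonormal_iff_ite.mp b.orthonormal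
  have hbn : ∀ m : Fin n, ‖b m‖ = 1 := b.orthonormal.1
  have horth : ∀ p q : Fin n, p.1 ≠ q.1 → ⟪b p, b q⟫_ℂ = 0 := by
    intro p q h
    rw [hb, if_neg (by simpa [Fin.ext_iff] using h)]
  set e : Fin k → V := fun i => b ⟨i.1, by omega⟩ with he_def
  have he : Orthonormal ℂ e := by
    rw [orthonormal_iff_ite]
    intro i j
    rw [he_def]
    rw [hb]
    simp [Fin.ext_iff]
  set u1 : V := b ⟨k, by omega⟩ with hu1_def
  set u2 : V := b ⟨k + 1, by omega⟩ with hu2_def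
  set u3 : V := b ⟨k + 2, by omega⟩ with hu3_def
  set u4 : V := b ⟨k + 3, by omega⟩ with hu4_def
  have he_u3 : ∀ i : Fin k, ⟪e i, u3⟫_ℂ = 0 := fun i => horth _ _ (by simp only [Fin.val_mk]; omega)
  have he_u4 : ∀ i : Fin k, ⟪e i, u4⟫_ℂ = 0 := fun i => horth _ _ (by simp only [Fin.val_mk]; omega)
  have hu34 : ⟪u3, u4⟫_ℂ = 0 := horth _ _ (by simp only [Fin.val_mk]; omega)
  have hu43 : ⟪u4, u3⟫_ℂ = 0 := horth _ _ (by simp only [Fin.val_mk]; omega)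
  -- z = P(u3, u4)
  have hz_e : ∀ i : Fin k, ⟪e i, Pv φ e u3 u4⟫_ℂ = 0 := fun i =>
    inner_eq_zero_symm.mp (by rw [inner_Pv, phi_eq03])
  have hz_u3 : ⟪u3, Pv φ e u3 u4⟫_ℂ = 0 :=
    inner_eq_zero_symm.mp (by rw [inner_Pv, phi_eq13])
  have hz_u4 : ⟪u4, Pv φ e u3 u4⟫_ℂ = 0 :=
    inner_eq_zero_symm.mp (by rw [inner_Pv, phi_eq23])
  have hz_norm : ‖Pv φ e u3 u4‖ = 1 := by
    apply norm_Pv hφ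
    refine (he.snocc (hbn _) he_u3).snocc (hbn _) ?_
    intro i
    induction i using Fin.lastCases with
    | last => simpa [Fin.snoc_last] using hu34
    | cast i => simpa [Fin.snoc_castSucc] using he_u4 i
  -- the key step : P(u, z) = 0 for u = u1 or u2
  have key0 : ∀ m : Fin n, m.1 = k ∨ m.1 = k + 1 → Pv φ e (b m) (Pv φ e u3 u4) = 0 := by
    intro m hm
    have hmlt : k ≤ m.1 ∧ m.1 < k + 2 := by omega
    apply InnerProductSpace.ext_inner_right_basis (𝕜 := ℂ) b.toBasis
    intro i
    rw [OrthonormalBasis.coe_toBasis, inner_zero_left, inner_Pv, phi_swap23,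
      ← inner_Pv, neg_eq_zero]
    -- goal : ⟪Pv φ e (b m) (b i), Pv φ e u3 u4⟫ = 0
    have hem : ∀ j : Fin k, ⟪e j, b m⟫_ℂ = 0 := fun j => horth _ _ (by simp only [Fin.val_mk]; omega)
    rcases lt_or_ge i.1 k with hik | hik
    · -- b i is one of the e's
      have hbe : b i = e ⟨i.1, hik⟩ := by rw [he_def]
      rw [hbe, Pv_e, inner_zero_left]
    rcases eq_or_ne i m with rfl | him
    · rw [Pv_diag, inner_zero_left]
    rcases Nat.lt_or_ge i.1 (k + 4) with hik4 | hik4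
    · rcases (by omega : i.1 = k ∨ i.1 = k + 1 ∨ i.1 = k + 2 ∨ i.1 = k + 3) with hi | hi | hi | hi
      · -- b i ⟂ e, b m, u3, u4 : caseI
        apply caseI hφ he (hbn m) (hbn _) hem he_u3
          (fun j => horth ⟨j.1, by omega⟩ ⟨k + 3, by omega⟩ (by simp only [Fin.val_mk]; omega))
          (fun j => horth ⟨j.1, by omega⟩ i (by simp only [Fin.val_mk]; omega))
          (horth m ⟨k + 2, by omega⟩ (by simp only [Fin.val_mk]; omega))
          (horth m i (fun h => him (Fin.ext h.symm)))
          (horth ⟨k + 2, by omega⟩ i (by simp only [Fin.val_mk]; omega))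
          (horth m ⟨k + 3, by omega⟩ (by simp only [Fin.val_mk]; omega))
          (horth ⟨k + 2, by omega⟩ ⟨k + 3, by omega⟩ (by simp only [Fin.val_mk]; omega))
          (horth ⟨k + 3, by omega⟩ i (by simp only [Fin.val_mk]; omega))
      · apply caseI hφ he (hbn m) (hbn _) hem he_u3
          (fun j => horth ⟨j.1, by omega⟩ ⟨k + 3, by omega⟩ (by simp only [Fin.val_mk]; omega))
          (fun j => horth ⟨j.1, by omega⟩ i (by simp only [Fin.val_mk]; omega))
          (horth m ⟨k + 2, by omega⟩ (by simp only [Fin.val_mk]; omega))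
          (horth m i (fun h => him (Fin.ext h.symm)))
          (horth ⟨k + 2, by omega⟩ i (by simp only [Fin.val_mk]; omega))
          (horth m ⟨k + 3, by omega⟩ (by simp only [Fin.val_mk]; omega))
          (horth ⟨k + 2, by omega⟩ ⟨k + 3, by omega⟩ (by simp only [Fin.val_mk]; omega))
          (horth ⟨k + 3, by omega⟩ i (by simp only [Fin.val_mk]; omega))
      · -- b i = u3
        have hbi : b i = u3 := by rw [hu3_def]; exact congrArg b (Fin.ext (by simp [hi]))
        rw [hbi, Pv_neg12, inner_neg_left,
          keyA hφ he (hbn _) he_u3 hem (horth _ _ (by simp only [Fin.val_mk]; omega)) he_u4 hu34,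
          horth _ _ (by simp only [Fin.val_mk]; omega), neg_zero]
      · -- b i = u4
        have hbi : b i = u4 := by rw [hu4_def]; exact congrArg b (Fin.ext (by simp [hi]))
        have hz' : Pv φ e u3 u4 = -Pv φ e u4 u3 := Pv_neg12 u3 u4
        rw [hbi, Pv_neg12, hz', inner_neg_left, inner_neg_right, neg_neg,
          keyA hφ he (hbn _) he_u4 hem (horth _ _ (by simp only [Fin.val_mk]; omega)) he_u3 hu43,
          horth _ _ (by simp only [Fin.val_mk]; omega)]
    · -- i.1 ≥ k + 4 : again caseI
      apply caseI hφ he (hbn m) (hbn _) hem he_u3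
        (fun j => horth ⟨j.1, by omega⟩ ⟨k + 3, by omega⟩ (by simp only [Fin.val_mk]; omega))
        (fun j => horth ⟨j.1, by omega⟩ i (by simp only [Fin.val_mk]; omega))
        (horth m ⟨k + 2, by omega⟩ (by simp only [Fin.val_mk]; omega))
        (horth m i (fun h => him (Fin.ext h.symm)))
        (horth ⟨k + 2, by omega⟩ i (by simp only [Fin.val_mk]; omega))
        (horth m ⟨k + 3, by omega⟩ (by simp only [Fin.val_mk]; omega))
        (horth ⟨k + 2, by omega⟩ ⟨k + 3, by omega⟩ (by simp only [Fin.val_mk]; omega))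
        (horth ⟨k + 3, by omega⟩ i (by simp only [Fin.val_mk]; omega))
  -- collapse : z is a multiple of b m
  have collapse : ∀ m : Fin n, m.1 = k ∨ m.1 = k + 1 →
      Pv φ e u3 u4 = ⟪b m, Pv φ e u3 u4⟫_ℂ • b m := by
    intro m hm
    have hem : ∀ j : Fin k, ⟪e j, b m⟫_ℂ = 0 := fun j => horth _ _ (by simp only [Fin.val_mk]; omega)
    set q : V := Pv φ e u3 u4 - ⟪b m, Pv φ e u3 u4⟫_ℂ • b m with hq_def
    have hq_e : ∀ j : Fin k, ⟪e j, q⟫_ℂ = 0 := by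
      intro j
      rw [hq_def, inner_sub_right, inner_smul_right, hz_e, hem, mul_zero, sub_zero]
    have hq_m : ⟪b m, q⟫_ℂ = 0 := by
      rw [hq_def, inner_sub_right, inner_smul_right, hb, if_pos rfl, mul_one, sub_self]
    have hPq : Pv φ e (b m) q = 0 := by
      rw [hq_def, Pv_sub2, Pv_smul2, key0 m hm, Pv_diag, smul_zero, sub_zero]
    have h := keyA hφ he (hbn m) hem hq_e hq_m hq_e hq_m
    rw [hPq, inner_zero_left] at h
    have : q = 0 := inner_self_eq_zero.mp h.symm
    rw [hq_def, sub_eq_zero] at this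
    exact this
  have hA := collapse ⟨k, by omega⟩ (Or.inl rfl)
  have hB := collapse ⟨k + 1, by omega⟩ (Or.inr rfl)
  have h1 : ⟪Pv φ e u3 u4, Pv φ e u3 u4⟫_ℂ = 1 := by
    simp [inner_self_eq_norm_sq_to_K, hz_norm]
  have hc1 : ⟪b ⟨k + 1, by omega⟩, Pv φ e u3 u4⟫_ℂ = 0 := by
    have h2 := congrArg (fun x : V => ⟪b ⟨k + 1, by omega⟩, x⟫_ℂ) hA
    simpa [inner_smul_right, horth _ _ (by simp only [Fin.val_mk]; omega : ((⟨k+1, by omega⟩ : Fin n) : ℕ) ≠ ((⟨k, by omega⟩ : Fin n) : ℕ))] using h2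
  rw [hc1, zero_smul] at hB
  rw [hB] at hz_norm
  simp at hz_norm

end NoCross
section Rone
variable {V : Type*} [NormedAddCommGroup V] [InnerProductSpace ℂ V] [FiniteDimensional ℂ V]
  {φ : V [⋀^Fin 2]→ₗ[ℂ] ℂ}

/-- the pair (v, w) as a `Fin 2`-tuple via snoc -/
def S2 (v w : V) : Fin 2 → V := Fin.snoc (fun _ : Fin 1 => v) w

lemma S2_update1 (v v' w : V) : update (S2 v w) 0 v' = S2 v' w := by
  funext j; fin_cases j <;> simp [S2, Fin.snoc, update]
lemma S2_update2 (v w w' : V) : update (S2 v w) 1 w' = S2 v w' := by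
  funext j; fin_cases j <;> simp [S2, Fin.snoc, update]
lemma S2_apply1 (v w : V) : S2 v w 0 = v := by simp [S2, Fin.snoc]
lemma S2_apply2 (v w : V) : S2 v w 1 = w := by simp [S2, Fin.snoc]

lemma phi2_eq (v : V) : φ (S2 v v) = 0 :=
  φ.map_eq_zero_of_eq (i := 0) (j := 1) _ (by rw [S2_apply1, S2_apply2]) (by decide)

lemma phi2_add1 (v v' w : V) : φ (S2 (v + v') w) = φ (S2 v w) + φ (S2 v' w) := by
  simpa only [S2_update1] using φ.map_update_add (S2 v w) 0 v v'
lemma phi2_add2 (v x y : V) : φ (S2 v (x + y)) = φ (S2 v x) + φ (S2 v y) := by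
  simpa only [S2_update2] using φ.map_update_add (S2 v x) 1 x y
lemma phi2_smul1 (c : ℂ) (v w : V) : φ (S2 (c • v) w) = c * φ (S2 v w) := by
  simpa only [S2_update1, smul_eq_mul] using φ.map_update_smul (S2 v w) 0 c v
lemma phi2_smul2 (c : ℂ) (v w : V) : φ (S2 v (c • w)) = c * φ (S2 v w) := by
  simpa only [S2_update2, smul_eq_mul] using φ.map_update_smul (S2 v w) 1 c w

lemma phi2_swap (v w : V) : φ (S2 w v) = -φ (S2 v w) := by
  have h0 := phi2_eq (φ := φ) (v + w)
  rw [phi2_add1, phi2_add2, phi2_add2, phi2_eq, phi2_eq] at h0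
  linear_combination h0

noncomputable def Qv (φ : V [⋀^Fin 2]→ₗ[ℂ] ℂ) (v : V) : V :=
  (InnerProductSpace.toDual ℂ V).symm (contraction φ (fun _ : Fin 1 => v))

lemma inner_Qv (v w : V) : ⟪Qv φ v, w⟫_ℂ = φ (S2 v w) := by
  rw [Qv, InnerProductSpace.toDual_symm_apply, contraction_apply]; rfl

lemma norm_Qv (hφ : IsCrossProduct φ) {v : V} (hv : ‖v‖ = 1) : ‖Qv φ v‖ = 1 := by
  rw [Qv, LinearIsometryEquiv.norm_map]
  apply hφ
  rw [orthonormal_iff_ite]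
  intro i j
  have hi : i = j := Subsingleton.elim _ _
  simp [hi, inner_self_eq_norm_sq_to_K, hv]

lemma even_of_r1 {n : ℕ} (hn : finrank ℂ V = n)
    (hφ : IsCrossProduct φ) : Even n := by
  have b : OrthonormalBasis (Fin n) ℂ V :=
    (stdOrthonormalBasis ℂ V).reindex (finCongr hn)
  set M : Matrix (Fin n) (Fin n) ℂ := Matrix.of fun i j => φ (S2 (b i) (b j)) with hM_def
  -- the matrix is nonsingular
  have hdet : M.det ≠ 0 := by
    intro h0
    obtain ⟨c, hc0, hc⟩ := Matrix.exists_vecMul_eq_zero_iff.mpr h0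
    set v : V := ∑ i, c i • b i with hv_def
    have hv0 : v ≠ 0 := by
      intro h
      apply hc0
      have hv' : b.toBasis.equivFun.symm c = v := by
        rw [Basis.equivFun_symm_apply, hv_def]
        simp [OrthonormalBasis.coe_toBasis]
      rw [h] at hv'
      simpa using congrArg b.toBasis.equivFun hv'
    have hnv : ‖v‖ ≠ 0 := norm_ne_zero_iff.mpr hv0
    set v0 : V := ((‖v‖ : ℂ))⁻¹ • v with hv0_def
    have hv0n : ‖v0‖ = 1 := by
      rw [hv0_def, norm_smul]
      simp only [norm_inv, Complex.norm_real, Real.norm_eq_abs,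
        abs_of_nonneg (norm_nonneg v)]
      exact inv_mul_cancel₀ hnv
    -- the linear functional x ↦ φ (S2 x (b j))
    have hlin : ∀ j, φ (S2 v (b j)) = 0 := by
      intro j
      have hL : ∀ x y : V, ∀ d : ℂ, φ (S2 (d • x + y) (b j))
          = d * φ (S2 x (b j)) + φ (S2 y (b j)) := fun x y d => by
        rw [phi2_add1, phi2_smul1]
      set L : V →ₗ[ℂ] ℂ :=
        { toFun := fun x => φ (S2 x (b j))
          map_add' := fun x y => phi2_add1 x y (b j)
          map_smul' := fun d x => phi2_smul1 d x (b j) } with hL_def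
      have : φ (S2 v (b j)) = L v := rfl
      rw [this, hv_def, map_sum]
      have : ∀ i, L (c i • b i) = c i * M i j := fun i => by
        simp [hL_def, phi2_smul1, hM_def]
      rw [Finset.sum_congr rfl fun i _ => this i]
      have := congrFun hc j
      simpa [Matrix.vecMul, dotProduct] using this
    have hQ0 : Qv φ v0 = 0 := by
      apply InnerProductSpace.ext_inner_right_basis (𝕜 := ℂ) b.toBasis
      intro i
      rw [OrthonormalBasis.coe_toBasis, inner_zero_left, inner_Qv, hv0_def,
        phi2_smul1, hlin, mul_zero]
    have := norm_Qv hφ hv0n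
    rw [hQ0] at this
    simp at this
  -- antisymmetry forces even parity
  have hMt : M.transpose = -M := by
    ext i j
    simp only [Matrix.transpose_apply, Matrix.neg_apply, hM_def, Matrix.of_apply]
    exact phi2_swap (φ := φ) (b i) (b j)
  have hdet2 : M.det = (-1 : ℂ) ^ n * M.det := by
    conv_lhs => rw [← Matrix.det_transpose, hMt, Matrix.det_neg]
    simp
  have hmul : (((-1 : ℂ)) ^ n - 1) * M.det = 0 := by linear_combination -hdet2
  have hpow : ((-1 : ℂ)) ^ n = 1 := by
    rcases mul_eq_zero.mp hmul with h | h
    · linear_combination h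
    · exact absurd h hdet
  rcases Nat.even_or_odd n with he | ho
  · exact he
  · exfalso
    rw [ho.neg_one_pow] at hpow
    norm_num at hpow

end Rone
/-- If an `n`-dimensional complex Hermitian vector space carries a complex `r`-fold
vector cross product with `1 ≤ r ≤ n - 1`, then either `r = 1` and `n` is even,
or `r = n - 1`. -/
theorem stmt_6 (n r : ℕ) (hr1 : 1 ≤ r) (hr2 : r ≤ n - 1)
    (V : Type*) [NormedAddCommGroup V] [InnerProductSpace ℂ V] [FiniteDimensional ℂ V]
    (hn : finrank ℂ V = n)
    (φ : V [⋀^Fin (r + 1)]→ₗ[ℂ] ℂ) (hφ : IsCrossProduct φ) :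
    (r = 1 ∧ Even n) ∨ r = n - 1 := by
  have hn2 : 2 ≤ n := by omega
  rcases eq_or_ne r 1 with rfl | hr
  · exact Or.inl ⟨rfl, even_of_r1 hn hφ⟩
  · right
    by_contra hne
    obtain ⟨k, rfl⟩ : ∃ k, r = k + 2 := ⟨r - 2, by omega⟩
    exact no_cross hn (by omega) φ hφ
end

section
/- Let V be an n-dimensional complex Hermitian vector space and φ a complex 1-fold vector cross product on V (a 2-form with ‖ι_e φ‖ = 1 for every unit vector e). Then n is even. -/
open Module

section aux
variable {V : Type*} [NormedAddCommGroup V] [InnerProductSpace ℂ V] [FiniteDimensional ℂ V]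

set_option linter.unusedSectionVars false

lemma upd0 (x y z : V) : Function.update ![x, y] 0 z = ![z, y] := by
  funext i; fin_cases i <;> simp

lemma upd1 (x y z : V) : Function.update ![x, y] 1 z = ![x, z] := by
  funext i; fin_cases i <;> simp

/-- The bilinear form associated to the 2-form `φ`. -/
noncomputable def Bform (φ : V [⋀^Fin (1 + 1)]→ₗ[ℂ] ℂ) : V →ₗ[ℂ] V →ₗ[ℂ] ℂ :=
  LinearMap.mk₂ ℂ (fun x y => φ ![x, y])
    (fun x x' y => by
      have := φ.toMultilinearMap.map_update_add ![x, y] 0 x x'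
      simpa [upd0] using this)
    (fun c x y => by
      have := φ.toMultilinearMap.map_update_smul ![x, y] 0 c x
      simpa [upd0] using this)
    (fun x y y' => by
      have := φ.toMultilinearMap.map_update_add ![x, y] 1 y y'
      simpa [upd1] using this)
    (fun c x y => by
      have := φ.toMultilinearMap.map_update_smul ![x, y] 1 c y
      simpa [upd1] using this)

lemma Bform_apply (φ : V [⋀^Fin (1 + 1)]→ₗ[ℂ] ℂ) (x y : V) :
    Bform φ x y = φ ![x, y] := rfl

lemma contraction_apply_s7 (φ : V [⋀^Fin (1 + 1)]→ₗ[ℂ] ℂ) (e : Fin 1 → V) (y : V) :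
    contraction φ e y = φ ![e 0, y] := by
  show φ (Function.update (Fin.snoc e (0:V)) (Fin.last 1) y) = _
  rw [Fin.update_snoc_last]
  congr 1
  funext i; fin_cases i <;> simp [Fin.snoc] <;> exact congrArg e (Subsingleton.elim _ _)

lemma Bform_alt (φ : V [⋀^Fin (1 + 1)]→ₗ[ℂ] ℂ) (x : V) : Bform φ x x = 0 :=
  φ.map_eq_zero_of_eq ![x, x] (by simp) (by decide : (0 : Fin 2) ≠ 1)

lemma Bform_skew (φ : V [⋀^Fin (1 + 1)]→ₗ[ℂ] ℂ) (x y : V) :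
    Bform φ y x = -Bform φ x y := by
  have h := Bform_alt φ (x + y)
  simp only [map_add, LinearMap.add_apply, Bform_alt] at h
  linear_combination h

end aux

/-- If an `n`-dimensional complex Hermitian vector space carries a complex `1`-fold
vector cross product (a `2`-form `φ` with `‖ι_e φ‖ = 1` for every unit vector `e`),
then `n` is even. -/
theorem stmt_7 (n : ℕ)
    (V : Type*) [NormedAddCommGroup V] [InnerProductSpace ℂ V] [FiniteDimensional ℂ V]
    (hn : finrank ℂ V = n)
    (φ : V [⋀^Fin (1 + 1)]→ₗ[ℂ] ℂ)
    (hφ : ∀ e : V, ‖e‖ = 1 → ‖contraction φ (fun _ => e)‖ = 1) :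
    Even n := by
  subst hn
  set B := Bform φ with hB
  have hsep : B.SeparatingLeft := by
    intro x hx
    by_contra hx0
    have hnx : (‖x‖ : ℂ) ≠ 0 := by
      simpa using (norm_ne_zero_iff.mpr hx0)
    set e := (‖x‖ : ℂ)⁻¹ • x with he_def
    have he : ‖e‖ = 1 := by
      rw [he_def, norm_smul]
      simp [norm_ne_zero_iff.mpr hx0]
    have h1 := hφ e he
    have hz : contraction φ (fun _ => e) = 0 := by
      ext y
      rw [contraction_apply_s7]
      show φ ![e, y] = 0
      have : φ ![e, y] = (‖x‖ : ℂ)⁻¹ * φ ![x, y] := by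
        rw [← Bform_apply, ← Bform_apply, he_def, map_smul]
        simp
      rw [this, ← Bform_apply, hx y]
      simp
    rw [hz] at h1
    simp at h1
  have hdet := (LinearMap.separatingLeft_iff_det_ne_zero (finBasis ℂ V)).mp hsep
  set M := LinearMap.toMatrix₂ (finBasis ℂ V) (finBasis ℂ V) B with hM
  by_contra hodd
  rw [Nat.not_even_iff_odd] at hodd
  have hskew : M.transpose = -M := by
    ext i j
    simp only [Matrix.transpose_apply, Matrix.neg_apply, hM, LinearMap.toMatrix₂_apply]
    exact Bform_skew φ _ _
  have : M.det = -M.det := by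
    conv_lhs => rw [← Matrix.det_transpose, hskew, Matrix.det_neg]
    simp [hodd.neg_one_pow]
  exact hdet (by linear_combination this / 2)
end

section
/- Let V be an n-dimensional complex Hermitian vector space with n ≥ 3 and 2 ≤ r ≤ n-2. Then there is no complex r-fold vector cross product on V. -/
open Module

set_option linter.unusedSectionVars false

section Aux

local notation "⟪" x ", " y "⟫" => @inner ℂ _ _ x y

variable {V : Type*} [NormedAddCommGroup V] [InnerProductSpace ℂ V] [FiniteDimensional ℂ V]
  {s : ℕ} (φ : V [⋀^Fin (s + 2 + 1)]→ₗ[ℂ] ℂ) (e : Fin s → V)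

lemma inner_combo4 (A B C D : V) (a b c d : ℂ) :
    ⟪a•A + b•B, c•C + d•D⟫
      = (starRingEnd ℂ a) * c * ⟪A,C⟫ + (starRingEnd ℂ a) * d * ⟪A,D⟫
        + (starRingEnd ℂ b) * c * ⟪B,C⟫ + (starRingEnd ℂ b) * d * ⟪B,D⟫ := by
  simp [inner_add_left, inner_add_right, inner_smul_left, inner_smul_right]
  ring

lemma norm_eq_one_of_inner17 {v : V} (h : ⟪v,v⟫ = 1) : ‖v‖ = 1 := by
  have h2 := inner_self_eq_norm_sq_to_K (𝕜 := ℂ) v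
  rw [h] at h2
  rw [← RCLike.ofReal_one (K := ℂ), ← RCLike.ofReal_pow, RCLike.ofReal_inj] at h2
  nlinarith [norm_nonneg v]

lemma inner_self_one17 {v : V} (h : ‖v‖ = 1) : ⟪v,v⟫ = 1 := by
  rw [inner_self_eq_norm_sq_to_K, h]
  norm_num

lemma contraction_apply17 (E : Fin (s + 2) → V) (v : V) :
    contraction φ E v = φ (Fin.snoc E v) := by
  simp [contraction, Fin.update_snoc_last]

noncomputable def W17 (x y : V) : V :=
  (InnerProductSpace.toDual ℂ V).symm (contraction φ (Fin.snoc (Fin.snoc e x) y))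

lemma inner_W17 (x y v : V) :
    ⟪W17 φ e x y, v⟫ = φ (Fin.snoc (Fin.snoc (Fin.snoc e x) y) v) := by
  rw [W17, InnerProductSpace.toDual_symm_apply, contraction_apply17]

lemma norm_W17 (hφ : IsCrossProduct φ) {x y : V}
    (h : Orthonormal ℂ (Fin.snoc (Fin.snoc e x) y)) : ‖W17 φ e x y‖ = 1 := by
  rw [W17, LinearIsometryEquiv.norm_map]
  exact hφ _ h

lemma W17_right (x : V) (α β : ℂ) (u v : V) :
    W17 φ e x (α • u + β • v)
      = (starRingEnd ℂ) α • W17 φ e x u + (starRingEnd ℂ) β • W17 φ e x v := by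
  have hc : contraction φ (Fin.snoc (Fin.snoc e x) (α•u+β•v))
      = α • contraction φ (Fin.snoc (Fin.snoc e x) u)
        + β • contraction φ (Fin.snoc (Fin.snoc e x) v) := by
    ext v₀
    have key : ∀ z : V, (Fin.snoc (Fin.snoc (Fin.snoc e x) z) v₀ : Fin (s+3) → V)
        = Function.update (Fin.snoc (Fin.snoc (Fin.snoc e x) 0) v₀)
            ((Fin.last (s+1)).castSucc) z := by
      intro z; rw [← Fin.snoc_update, Fin.update_snoc_last]
    simp only [contraction_apply17, ContinuousLinearMap.add_apply, ContinuousLinearMap.coe_smul',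
      Pi.smul_apply, smul_eq_mul]
    rw [key u, key v, key (α•u+β•v), AlternatingMap.map_update_add,
      AlternatingMap.map_update_smul, AlternatingMap.map_update_smul]
    simp
  rw [W17, hc, map_add, LinearIsometryEquiv.map_smulₛₗ, LinearIsometryEquiv.map_smulₛₗ]
  rfl

lemma W17_left (y : V) (α β : ℂ) (u v : V) :
    W17 φ e (α • u + β • v) y
      = (starRingEnd ℂ) α • W17 φ e u y + (starRingEnd ℂ) β • W17 φ e v y := by
  have hc : contraction φ (Fin.snoc (Fin.snoc e (α•u+β•v)) y)
      = α • contraction φ (Fin.snoc (Fin.snoc e u) y)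
        + β • contraction φ (Fin.snoc (Fin.snoc e v) y) := by
    ext v₀
    have key : ∀ z : V, (Fin.snoc (Fin.snoc (Fin.snoc e z) y) v₀ : Fin (s+3) → V)
        = Function.update (Fin.snoc (Fin.snoc (Fin.snoc e 0) y) v₀)
            ((Fin.last s).castSucc.castSucc) z := by
      intro z; rw [← Fin.snoc_update, ← Fin.snoc_update, Fin.update_snoc_last]
    simp only [contraction_apply17, ContinuousLinearMap.add_apply, ContinuousLinearMap.coe_smul',
      Pi.smul_apply, smul_eq_mul]
    rw [key u, key v, key (α•u+β•v), AlternatingMap.map_update_add,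
      AlternatingMap.map_update_smul, AlternatingMap.map_update_smul]
    simp
  rw [W17, hc, map_add, LinearIsometryEquiv.map_smulₛₗ, LinearIsometryEquiv.map_smulₛₗ]
  rfl

lemma swap_family17 (x y v₀ : V) :
    (Fin.snoc (Fin.snoc (Fin.snoc e y) x) v₀ : Fin (s+3) → V)
      ∘ (Equiv.swap ((Fin.last s).castSucc.castSucc) ((Fin.last (s+1)).castSucc))
      = Fin.snoc (Fin.snoc (Fin.snoc e x) y) v₀ := by
  set i : Fin (s+3) := (Fin.last s).castSucc.castSucc with hi
  set j : Fin (s+3) := (Fin.last (s+1)).castSucc with hj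
  funext k
  rcases eq_or_ne k i with rfl | hki
  · simp [Equiv.swap_apply_left, hi, hj, Fin.snoc_castSucc, Fin.snoc_last]
  rcases eq_or_ne k j with rfl | hkj
  · simp [Equiv.swap_apply_right, hi, hj, Fin.snoc_castSucc, Fin.snoc_last]
  · rw [Function.comp_apply, Equiv.swap_apply_of_ne_of_ne hki hkj]
    induction k using Fin.lastCases with
    | last => simp
    | cast k' =>
      induction k' using Fin.lastCases with
      | last => exact absurd rfl hkj
      | cast k'' =>
        induction k'' using Fin.lastCases with
        | last => exact absurd rfl hki
        | cast k''' => simp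

lemma W17_swap (x y : V) : W17 φ e x y = - W17 φ e y x := by
  have hc : contraction φ (Fin.snoc (Fin.snoc e x) y)
      = - contraction φ (Fin.snoc (Fin.snoc e y) x) := by
    ext v₀
    have hij : ((Fin.last s).castSucc.castSucc : Fin (s+3)) ≠ (Fin.last (s+1)).castSucc := by
      simp [Fin.ext_iff]
    simp only [contraction_apply17, ContinuousLinearMap.neg_apply]
    rw [← swap_family17 e x y v₀, AlternatingMap.map_swap _ _ hij]
  rw [W17, W17, hc, map_neg]

lemma inner_W17_e (x y : V) (t : Fin s) : ⟪W17 φ e x y, e t⟫ = 0 := by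
  rw [inner_W17]
  refine AlternatingMap.map_eq_zero_of_eq _ _ (i := t.castSucc.castSucc.castSucc)
    (j := Fin.last (s+2)) ?_ ?_
  · simp
  · exact ne_of_lt (Fin.castSucc_lt_last _)

lemma ON17 (he : Orthonormal ℂ e) {x y : V} (hx : ‖x‖ = 1) (hy : ‖y‖ = 1)
    (hxy : ⟪x, y⟫ = 0) (hex : ∀ j, ⟪e j, x⟫ = 0) (hey : ∀ j, ⟪e j, y⟫ = 0) :
    Orthonormal ℂ (Fin.snoc (Fin.snoc e x) y : Fin (s+2) → V) := by
  have hxx : ⟪x, x⟫ = 1 := inner_self_one17 hx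
  have hyy : ⟪y, y⟫ = 1 := inner_self_one17 hy
  have hyx : ⟪y, x⟫ = 0 := by rwa [inner_eq_zero_symm] at hxy
  have hxe : ∀ j, ⟪x, e j⟫ = 0 := fun j => by rw [inner_eq_zero_symm]; exact hex j
  have hye : ∀ j, ⟪y, e j⟫ = 0 := fun j => by rw [inner_eq_zero_symm]; exact hey j
  rw [orthonormal_iff_ite] at he ⊢
  intro i j
  induction i using Fin.lastCases with
  | last =>
    induction j using Fin.lastCases with
    | last => simpa using hyy
    | cast j' =>
      induction j' using Fin.lastCases with
      | last => simpa [Fin.ext_iff] using hyx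
      | cast j'' => simpa [Fin.ext_iff, show s + 1 ≠ (j'' : ℕ) from by have := j''.isLt; omega] using hye j''
  | cast i' =>
    induction i' using Fin.lastCases with
    | last =>
      induction j using Fin.lastCases with
      | last => simpa [Fin.ext_iff] using hxy
      | cast j' =>
        induction j' using Fin.lastCases with
        | last => simpa using hxx
        | cast j'' => simpa [Fin.ext_iff, show s ≠ (j'' : ℕ) from (Nat.ne_of_lt j''.isLt).symm] using hxe j''
    | cast i'' =>
      induction j using Fin.lastCases with
      | last => simpa [Fin.ext_iff, show (i'' : ℕ) ≠ s + 1 from by have := i''.isLt; omega] using hey i''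
      | cast j' =>
        induction j' using Fin.lastCases with
        | last => simpa [Fin.ext_iff, show (i'' : ℕ) ≠ s from Nat.ne_of_lt i''.isLt] using hex i''
        | cast j'' => simpa [Fin.ext_iff] using he i'' j''

lemma L1 (hφ : IsCrossProduct φ) (he : Orthonormal ℂ e) {x y z : V}
    (hx : ‖x‖ = 1) (hy : ‖y‖ = 1) (hz : ‖z‖ = 1)
    (hxy : ⟪x,y⟫ = 0) (hxz : ⟪x,z⟫ = 0) (hyz : ⟪y,z⟫ = 0)
    (hex : ∀ j, ⟪e j, x⟫ = 0) (hey : ∀ j, ⟪e j, y⟫ = 0) (hez : ∀ j, ⟪e j, z⟫ = 0) :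
    ⟪W17 φ e x y, W17 φ e x z⟫ = 0 := by
  have hyy : ⟪y, y⟫ = 1 := inner_self_one17 hy
  have hzz : ⟪z, z⟫ = 1 := inner_self_one17 hz
  have hzy : ⟪z, y⟫ = 0 := by rwa [inner_eq_zero_symm] at hyz
  set A := W17 φ e x y with hA
  set B := W17 φ e x z with hB
  have hAA : ⟪A,A⟫ = 1 := inner_self_one17 (norm_W17 φ e hφ (ON17 e he hx hy hxy hex hey))
  have hBB : ⟪B,B⟫ = 1 := inner_self_one17 (norm_W17 φ e hφ (ON17 e he hx hz hxz hex hez))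
  have hBA : ⟪B,A⟫ = (starRingEnd ℂ) ⟪A,B⟫ := (inner_conj_symm B A).symm
  have mk : ∀ β : ℂ, (starRingEnd ℂ) β * β = 16/25 →
      ⟪(starRingEnd ℂ) (3/5:ℂ) • A + (starRingEnd ℂ) β • B,
        (starRingEnd ℂ) (3/5:ℂ) • A + (starRingEnd ℂ) β • B⟫ = 1 := by
    intro β hβ
    set u := (3/5:ℂ) • y + β • z with hu
    have huu : ⟪u,u⟫ = 1 := by
      rw [hu, inner_combo4, hyy, hzz, hyz, hzy, hβ]
      simp only [map_div₀, map_ofNat]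
      norm_num
    have hxu : ⟪x,u⟫ = 0 := by
      simp [hu, inner_add_right, inner_smul_right, hxy, hxz]
    have heu : ∀ j, ⟪e j,u⟫ = 0 := fun j => by
      simp [hu, inner_add_right, inner_smul_right, hey j, hez j]
    have hnu : ‖u‖ = 1 := norm_eq_one_of_inner17 huu
    have h1 : ‖W17 φ e x u‖ = 1 := norm_W17 φ e hφ (ON17 e he hx hnu hxu hex heu)
    have h2 : W17 φ e x u = (starRingEnd ℂ) (3/5:ℂ) • A + (starRingEnd ℂ) β • B :=
      W17_right φ e x _ _ y z
    rw [← h2]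
    exact inner_self_one17 h1
  have e1 := mk (4/5) (by simp only [map_div₀, map_ofNat]; norm_num)
  have e2 := mk ((4/5)*Complex.I) (by simp only [map_mul, map_div₀, map_ofNat, Complex.conj_I]; linear_combination (-16/25 : ℂ)*Complex.I_sq)
  rw [inner_combo4, hAA, hBB, hBA] at e1 e2
  simp only [Complex.conj_conj, map_mul, map_div₀, map_ofNat, Complex.conj_I, map_neg] at e1 e2
  linear_combination (25/24 : ℂ)*e1 + ((25/24 : ℂ)*Complex.I)*e2
    + ((2/3)*Complex.I + (1/2)*⟪A,B⟫ - (1/2)*(starRingEnd ℂ) ⟪A,B⟫) * Complex.I_sq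

lemma L2 (hφ : IsCrossProduct φ) (he : Orthonormal ℂ e) {x₁ x₂ y₁ y₂ : V}
    (hx₁ : ‖x₁‖ = 1) (hx₂ : ‖x₂‖ = 1) (hy₁ : ‖y₁‖ = 1) (hy₂ : ‖y₂‖ = 1)
    (h12 : ⟪x₁,x₂⟫ = 0) (h1a : ⟪x₁,y₁⟫ = 0) (h1b : ⟪x₁,y₂⟫ = 0)
    (h2a : ⟪x₂,y₁⟫ = 0) (h2b : ⟪x₂,y₂⟫ = 0) (hab : ⟪y₁,y₂⟫ = 0)
    (he1 : ∀ j, ⟪e j, x₁⟫ = 0) (he2 : ∀ j, ⟪e j, x₂⟫ = 0)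
    (hea : ∀ j, ⟪e j, y₁⟫ = 0) (heb : ∀ j, ⟪e j, y₂⟫ = 0) :
    ⟪W17 φ e x₁ y₁, W17 φ e x₂ y₂⟫ = 0 := by
  have h21 : ⟪x₂,x₁⟫ = 0 := by rwa [inner_eq_zero_symm] at h12
  have h11 : ⟪x₁,x₁⟫ = 1 := inner_self_one17 hx₁
  have h22 : ⟪x₂,x₂⟫ = 1 := inner_self_one17 hx₂
  set A := W17 φ e x₁ y₁ with hA
  set B := W17 φ e x₂ y₁ with hB
  set C := W17 φ e x₁ y₂ with hC
  set D := W17 φ e x₂ y₂ with hD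
  have hAC : ⟪A,C⟫ = 0 := L1 φ e hφ he hx₁ hy₁ hy₂ h1a h1b hab he1 hea heb
  have hBD : ⟪B,D⟫ = 0 := L1 φ e hφ he hx₂ hy₁ hy₂ h2a h2b hab he2 hea heb
  have mk : ∀ β : ℂ, (starRingEnd ℂ) β * β = 16/25 →
      ⟪(starRingEnd ℂ) (3/5:ℂ) • A + (starRingEnd ℂ) β • B,
        (starRingEnd ℂ) (3/5:ℂ) • C + (starRingEnd ℂ) β • D⟫ = 0 := by
    intro β hβ
    set ξ := (3/5:ℂ) • x₁ + β • x₂ with hξ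
    have hξξ : ⟪ξ,ξ⟫ = 1 := by
      rw [hξ, inner_combo4, h11, h22, h12, h21, hβ]
      simp only [map_div₀, map_ofNat]
      norm_num
    have hnξ : ‖ξ‖ = 1 := norm_eq_one_of_inner17 hξξ
    have hξa : ⟪ξ,y₁⟫ = 0 := by
      simp [hξ, inner_add_left, inner_smul_left, h1a, h2a]
    have hξb : ⟪ξ,y₂⟫ = 0 := by
      simp [hξ, inner_add_left, inner_smul_left, h1b, h2b]
    have heξ : ∀ j, ⟪e j, ξ⟫ = 0 := fun j => by
      simp [hξ, inner_add_right, inner_smul_right, he1 j, he2 j]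
    have h0 : ⟪W17 φ e ξ y₁, W17 φ e ξ y₂⟫ = 0 :=
      L1 φ e hφ he hnξ hy₁ hy₂ hξa hξb hab heξ hea heb
    have r1 : W17 φ e ξ y₁ = (starRingEnd ℂ) (3/5:ℂ) • A + (starRingEnd ℂ) β • B :=
      W17_left φ e y₁ _ _ x₁ x₂
    have r2 : W17 φ e ξ y₂ = (starRingEnd ℂ) (3/5:ℂ) • C + (starRingEnd ℂ) β • D :=
      W17_left φ e y₂ _ _ x₁ x₂
    rw [r1, r2] at h0
    exact h0
  have e1 := mk (4/5) (by simp only [map_div₀, map_ofNat]; norm_num)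
  have e2 := mk ((4/5)*Complex.I)
    (by simp only [map_mul, map_div₀, map_ofNat, Complex.conj_I]
        linear_combination (-16/25 : ℂ)*Complex.I_sq)
  rw [inner_combo4, hAC, hBD] at e1 e2
  simp only [Complex.conj_conj, map_mul, map_div₀, map_ofNat, Complex.conj_I, map_neg] at e1 e2
  linear_combination (25/24:ℂ)*e1 + ((25/24:ℂ)*Complex.I)*e2
    + ((1/2)*⟪A,D⟫ - (1/2)*⟪B,C⟫)*Complex.I_sq

end Aux

/-- If `n ≥ 3` and `2 ≤ r ≤ n - 2`, then an `n`-dimensional complex Hermitian vector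
space admits no complex `r`-fold vector cross product. -/
theorem stmt_17 (n r : ℕ) (hn3 : 3 ≤ n) (hr1 : 2 ≤ r) (hr2 : r ≤ n - 2)
    (V : Type*) [NormedAddCommGroup V] [InnerProductSpace ℂ V] [FiniteDimensional ℂ V]
    (hn : finrank ℂ V = n) :
    ¬ ∃ φ : V [⋀^Fin (r + 1)]→ₗ[ℂ] ℂ, IsCrossProduct φ := by
  rintro ⟨φ, hφ⟩
  obtain ⟨s, rfl⟩ : ∃ s, r = s + 2 := ⟨r - 2, by omega⟩
  set m := n - s with hm
  have hm4 : 4 ≤ m := by omega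
  have hnm : n = s + m := by omega
  set B := stdOrthonormalBasis ℂ V with hBdef
  have hB := B.orthonormal
  rw [orthonormal_iff_ite] at hB
  set e : Fin s → V := fun j => B ⟨(j : ℕ), by rw [hn]; omega⟩ with he_def
  set f : Fin m → V := fun a => B ⟨s + (a : ℕ), by have := a.isLt; rw [hn]; omega⟩ with hf_def
  have he : Orthonormal ℂ e := by
    rw [orthonormal_iff_ite]
    intro i j
    have h := hB ⟨(i : ℕ), by rw [hn]; omega⟩ ⟨(j : ℕ), by rw [hn]; omega⟩
    simpa [he_def, Fin.ext_iff] using h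
  have hff : ∀ a b : Fin m, (inner ℂ (f a) (f b) : ℂ) = if a = b then 1 else 0 := by
    intro a b
    have h := hB ⟨s + (a : ℕ), by have := a.isLt; rw [hn]; omega⟩
      ⟨s + (b : ℕ), by have := b.isLt; rw [hn]; omega⟩
    simpa [hf_def, Fin.ext_iff] using h
  have hef : ∀ (j : Fin s) (a : Fin m), (inner ℂ (e j) (f a) : ℂ) = 0 := by
    intro j a
    have h := hB ⟨(j : ℕ), by rw [hn]; omega⟩ ⟨s + (a : ℕ), by have := a.isLt; rw [hn]; omega⟩
    simpa [he_def, hf_def, Fin.ext_iff, show (j : ℕ) ≠ s + (a : ℕ) from by have := j.isLt; omega] using h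
  have hnf : ∀ a, ‖f a‖ = 1 := fun a => norm_eq_one_of_inner17 (by rw [hff]; simp)
  have hfab : ∀ {a b : Fin m}, a ≠ b → (inner ℂ (f a) (f b) : ℂ) = 0 := by
    intro a b hab; rw [hff]; simp [hab]
  -- the pairs
  set P : Fin (m+1) → Fin m × Fin m := fun k =>
    if h : (k : ℕ) < m - 1 then (⟨0, by omega⟩, ⟨(k : ℕ) + 1, by omega⟩)
    else if h2 : (k : ℕ) = m - 1 then (⟨1, by omega⟩, ⟨2, by omega⟩)
    else (⟨1, by omega⟩, ⟨3, by omega⟩) with hPdef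
  have hPlt : ∀ k, ((P k).1 : ℕ) < ((P k).2 : ℕ) := by
    intro k
    simp only [hPdef]
    split_ifs <;> simp
  have hPinj : Function.Injective P := by
    intro k k' h
    have hk := k.isLt
    have hk' := k'.isLt
    simp only [hPdef] at h
    split_ifs at h <;> simp only [Prod.ext_iff, Fin.ext_iff, Fin.mk.injEq] at h <;>
      exact Fin.ext (by omega)
  have hPne : ∀ k, (P k).1 ≠ (P k).2 := fun k => Fin.ne_of_val_ne (Nat.ne_of_lt (hPlt k))
  -- the orthonormal family
  set g : (Fin s ⊕ Fin (m+1)) → V :=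
    Sum.elim e (fun k => W17 φ e (f (P k).1) (f (P k).2)) with hgdef
  have hg : Orthonormal ℂ g := by
    rw [orthonormal_iff_ite]
    rintro (i | i) (j | j)
    · have h := orthonormal_iff_ite.mp he i j
      simpa [hgdef] using h
    · have h0 : (inner ℂ (W17 φ e (f (P j).1) (f (P j).2)) (e i) : ℂ) = 0 :=
        inner_W17_e φ e _ _ i
      rw [inner_eq_zero_symm] at h0
      simpa [hgdef] using h0
    · simpa [hgdef] using inner_W17_e φ e _ _ j
    · rcases eq_or_ne i j with rfl | hij
      · have hon := ON17 e he (hnf (P i).1) (hnf (P i).2) (hfab (hPne i))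
          (fun t => hef t _) (fun t => hef t _)
        have h1 : (inner ℂ (W17 φ e (f (P i).1) (f (P i).2)) (W17 φ e (f (P i).1) (f (P i).2)) : ℂ) = 1 :=
          inner_self_one17 (norm_W17 φ e hφ hon)
        simpa [hgdef] using h1
      · have hPQ : P i ≠ P j := fun h => hij (hPinj h)
        set a := (P i).1 with ha
        set b := (P i).2 with hb
        set c := (P j).1 with hc
        set d := (P j).2 with hd
        have hab : (a : ℕ) < b := hPlt i
        have hcd : (c : ℕ) < d := hPlt j
        have hab' : a ≠ b := Fin.ne_of_val_ne (Nat.ne_of_lt hab)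
        have hcd' : c ≠ d := Fin.ne_of_val_ne (Nat.ne_of_lt hcd)
        have main : (inner ℂ (W17 φ e (f a) (f b)) (W17 φ e (f c) (f d)) : ℂ) = 0 := by
          by_cases hac : a = c
          · have hbd : b ≠ d := fun h => hPQ (Prod.ext hac h)
            have hvac : (a : ℕ) = c := congrArg Fin.val hac
            rw [hac]
            exact L1 φ e hφ he (hnf c) (hnf b) (hnf d)
              (hfab (Fin.ne_of_val_ne (by omega))) (hfab hcd') (hfab hbd)
              (fun t => hef t _) (fun t => hef t _) (fun t => hef t _)
          · by_cases hbd : b = d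
            · have hvbd : (b : ℕ) = d := congrArg Fin.val hbd
              rw [W17_swap φ e (f a) (f b), W17_swap φ e (f c) (f d), inner_neg_neg, ← hbd]
              exact L1 φ e hφ he (hnf b) (hnf a) (hnf c)
                (hfab (Ne.symm hab')) (hfab (Fin.ne_of_val_ne (by omega))) (hfab hac)
                (fun t => hef t _) (fun t => hef t _) (fun t => hef t _)
            · by_cases hbc : b = c
              · have hvbc : (b : ℕ) = c := congrArg Fin.val hbc
                rw [W17_swap φ e (f a) (f b), inner_neg_left, ← hbc]
                rw [L1 φ e hφ he (hnf b) (hnf a) (hnf d)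
                  (hfab (Ne.symm hab')) (hfab (Fin.ne_of_val_ne (by omega))) (hfab (Fin.ne_of_val_ne (by omega)))
                  (fun t => hef t _) (fun t => hef t _) (fun t => hef t _), neg_zero]
              · by_cases had : a = d
                · have hvad : (a : ℕ) = d := congrArg Fin.val had
                  rw [W17_swap φ e (f c) (f d), inner_neg_right, ← had]
                  rw [L1 φ e hφ he (hnf a) (hnf b) (hnf c)
                    (hfab hab') (hfab hac) (hfab hbc)
                    (fun t => hef t _) (fun t => hef t _) (fun t => hef t _), neg_zero]
                · exact L2 φ e hφ he (hnf a) (hnf c) (hnf b) (hnf d)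
                    (hfab hac) (hfab hab') (hfab had) (hfab (Ne.symm hbc)) (hfab hcd') (hfab hbd)
                    (fun t => hef t _) (fun t => hef t _) (fun t => hef t _) (fun t => hef t _)
        simp only [hgdef, Sum.elim_inr]
        rw [main]
        simp [hij]
  have hcard := hg.linearIndependent.fintype_card_le_finrank
  rw [hn] at hcard
  simp only [Fintype.card_sum, Fintype.card_fin] at hcard
  omega
end
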